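/- Let d ≥ 1 and N ≥ 1 be integers and let ℓ_1, …, ℓ_{d+1} be positive integers with ℓ_i ≤ N for all i and ℓ_i + ℓ_j ≥ N for all 1 ≤ i < j ≤ d+1. For every pair of distinct indices i, j ∈ {1,…,d+1} and all functions f, g : ℤ^d → ℝ, the operator L_{i,j} is self-adjoint with respect to the inner product: ⟨L_{i,j}f, g⟩_{ℓ,N} = ⟨f, L_{i,j}g⟩_{ℓ,N}. -/

import Mathlib

open Finset

noncomputable section

/-- Pochhammer symbol `(a)_n = a(a+1)⋯(a+n-1)`. -/
def poch (a : ℝ) (n : ℕ) : ℝ := ∏ k ∈ Finset.range n, (a + k)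

/-- The discrete polyhedral domain `V_{ℓ,N}^d`. -/
def polyDomain (d N : ℕ) (ℓ : Fin (d + 1) → ℕ) : Finset (Fin d → ℕ) :=
  (Fintype.piFinset fun i : Fin d => Finset.range (ℓ i.castSucc + 1)).filter fun x =>
    N - ℓ (Fin.last d) ≤ ∑ i, x i ∧ ∑ i, x i ≤ N

/-- The weight function `H_{ℓ,N}` on `V_{ℓ,N}^d`. -/
def weightH (d N : ℕ) (ℓ : Fin (d + 1) → ℕ) (x : Fin d → ℕ) : ℝ :=
  (Nat.factorial N : ℝ) / poch (-((∑ i, ℓ i : ℕ) : ℝ)) N *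
    ((∏ i : Fin d, poch (-(ℓ i.castSucc : ℝ)) (x i) / (Nat.factorial (x i) : ℝ)) *
      (poch (-(ℓ (Fin.last d) : ℝ)) (N - ∑ i, x i) /
        (Nat.factorial (N - ∑ i, x i) : ℝ)))

/-- The inner product `⟨f,g⟩_{ℓ,N}` for functions on `ℤ^d`. -/
def innerH (d N : ℕ) (ℓ : Fin (d + 1) → ℕ) (f g : (Fin d → ℤ) → ℝ) : ℝ :=
  ∑ x ∈ polyDomain d N ℓ,
    f (fun t => (x t : ℤ)) * g (fun t => (x t : ℤ)) * weightH d N ℓ x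

/-- Extended coordinate: `x_k` for `k ≤ d` and `x_{d+1} = N - |x|`. -/
def coordExt (d : ℕ) (N : ℝ) (x : Fin d → ℤ) (k : Fin (d + 1)) : ℝ :=
  if h : (k : ℕ) < d then (x ⟨k, h⟩ : ℝ) else N - ∑ i, (x i : ℝ)

/-- The shift vector: `e_k` for `k ≤ d`, and `0` for `k = d+1`. -/
def shiftVec (d : ℕ) (k : Fin (d + 1)) : Fin d → ℤ :=
  if h : (k : ℕ) < d then Pi.single ⟨k, h⟩ 1 else 0

/-- The operator `L_{i,j}`, for `i ≠ j ∈ {1,…,d+1}`. -/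
def Lop (d : ℕ) (N : ℝ) (ℓ : Fin (d + 1) → ℝ) (i j : Fin (d + 1))
    (f : (Fin d → ℤ) → ℝ) : (Fin d → ℤ) → ℝ := fun x =>
  coordExt d N x j * (coordExt d N x i - ℓ i) *
      (f (x + shiftVec d i - shiftVec d j) - f x) +
    coordExt d N x i * (coordExt d N x j - ℓ j) *
      (f (x + shiftVec d j - shiftVec d i) - f x)

namespace SelfAdjAux

variable {d N : ℕ}

lemma poch_succ (a : ℝ) (n : ℕ) : poch a (n + 1) = poch a n * (a + n) :=
  Finset.prod_range_succ _ _

/-- Integer extended coordinate. -/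
def EZ (d N : ℕ) (y : Fin d → ℤ) (k : Fin (d + 1)) : ℤ :=
  if h : (k : ℕ) < d then y ⟨k, h⟩ else (N : ℤ) - ∑ t, y t

lemma coordExt_eq (y : Fin d → ℤ) (k : Fin (d + 1)) :
    coordExt d (N : ℝ) y k = ((EZ d N y k : ℤ) : ℝ) := by
  unfold coordExt EZ
  split_ifs with h
  · rfl
  · push_cast; ring

lemma EZ_castSucc (y : Fin d → ℤ) (t : Fin d) : EZ d N y t.castSucc = y t := by
  unfold EZ
  rw [dif_pos (by simp [t.isLt])]
  exact congrArg y (Fin.ext (by simp))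

lemma EZ_last (y : Fin d → ℤ) : EZ d N y (Fin.last d) = (N : ℤ) - ∑ t, y t := by
  unfold EZ
  rw [dif_neg (by simp)]

lemma shiftVec_apply (k : Fin (d + 1)) (t : Fin d) :
    shiftVec d k t = if (k : ℕ) = (t : ℕ) then 1 else 0 := by
  unfold shiftVec
  split_ifs with h h2 h3
  · rw [show (⟨(k : ℕ), h⟩ : Fin d) = t from Fin.ext h2, Pi.single_eq_same]
  · rw [Pi.single_eq_of_ne (by simp [Fin.ext_iff]; omega)]
  · omega
  · rfl

lemma sum_shiftVec (k : Fin (d + 1)) :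
    ∑ t, shiftVec d k t = if (k : ℕ) < d then 1 else 0 := by
  unfold shiftVec
  split_ifs with h
  · simp
  · simp

lemma EZ_move (y : Fin d → ℤ) (i j k : Fin (d + 1)) :
    EZ d N (y + shiftVec d i - shiftVec d j) k =
      EZ d N y k + (if k = i then 1 else 0) - (if k = j then 1 else 0) := by
  by_cases hk : (k : ℕ) < d
  · unfold EZ
    rw [dif_pos hk, dif_pos hk]
    simp only [Pi.sub_apply, Pi.add_apply, shiftVec_apply, Fin.ext_iff]
    split_ifs <;> omega
  · unfold EZ
    rw [dif_neg hk, dif_neg hk]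
    have hkd : (k : ℕ) = d := by have := k.is_le; omega
    have hi := i.is_le
    have hj := j.is_le
    have h1 : (k = i) ↔ ¬ ((i : ℕ) < d) := by
      rw [Fin.ext_iff]; omega
    have h2 : (k = j) ↔ ¬ ((j : ℕ) < d) := by
      rw [Fin.ext_iff]; omega
    simp only [Pi.sub_apply, Pi.add_apply, Finset.sum_sub_distrib,
      Finset.sum_add_distrib, sum_shiftVec, h1, h2]
    split_ifs <;> omega


/-- The domain as a finset of integer vectors. -/
def DZ (d N : ℕ) (ℓ : Fin (d + 1) → ℕ) : Finset (Fin d → ℤ) :=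
  (polyDomain d N ℓ).image fun x t => (x t : ℤ)

lemma mem_DZ {ℓ : Fin (d + 1) → ℕ} (hlast : ℓ (Fin.last d) ≤ N) (y : Fin d → ℤ) :
    y ∈ DZ d N ℓ ↔ ∀ k, 0 ≤ EZ d N y k ∧ EZ d N y k ≤ (ℓ k : ℤ) := by
  constructor
  · intro hy
    obtain ⟨x, hx, rfl⟩ := Finset.mem_image.mp hy
    rw [polyDomain, Finset.mem_filter, Fintype.mem_piFinset] at hx
    obtain ⟨hbox, hs1, hs2⟩ := hx
    intro k
    by_cases hk : (k : ℕ) < d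
    · have hb := hbox ⟨k, hk⟩
      rw [Finset.mem_range] at hb
      unfold EZ
      rw [dif_pos hk]
      have hc : (⟨(k : ℕ), hk⟩ : Fin d).castSucc = k := Fin.ext (by simp)
      rw [hc] at hb
      beta_reduce
      constructor
      · positivity
      · exact_mod_cast Nat.lt_succ_iff.mp hb
    · have hkl : k = Fin.last d := Fin.ext (by have := k.is_le; simp; omega)
      subst hkl
      rw [EZ_last]
      have h1 : ((∑ t, x t : ℕ) : ℤ) = ∑ t, ((x t : ℤ)) := by push_cast; rfl
      constructor
      · omega
      · omega
  · intro h
    apply Finset.mem_image.mpr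
    refine ⟨fun t => (y t).toNat, ?_, ?_⟩
    · have hnn : ∀ t : Fin d, 0 ≤ y t := by
        intro t
        have := (h t.castSucc).1
        rwa [EZ_castSucc] at this
      rw [polyDomain, Finset.mem_filter, Fintype.mem_piFinset]
      have hsum : ((∑ t, (y t).toNat : ℕ) : ℤ) = ∑ t, y t := by
        push_cast
        exact Finset.sum_congr rfl fun t _ => Int.toNat_of_nonneg (hnn t)
      have hL := h (Fin.last d)
      rw [EZ_last] at hL
      refine ⟨?_, ?_, ?_⟩
      · intro t
        rw [Finset.mem_range]
        have := (h t.castSucc).2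
        rw [EZ_castSucc] at this
        omega
      · beta_reduce
        omega
      · beta_reduce
        omega
    · funext t
      have := (h t.castSucc).1
      rw [EZ_castSucc] at this
      simp [Int.toNat_of_nonneg this]

/-- The weight as a product over all `d+1` extended coordinates. -/
def PW (d N : ℕ) (ℓ : Fin (d + 1) → ℕ) (y : Fin d → ℤ) : ℝ :=
  (Nat.factorial N : ℝ) / poch (-((∑ i, ℓ i : ℕ) : ℝ)) N *
    ∏ k : Fin (d + 1),
      poch (-(ℓ k : ℝ)) ((EZ d N y k).toNat) /
        (Nat.factorial ((EZ d N y k).toNat) : ℝ)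

lemma weight_eq (ℓ : Fin (d + 1) → ℕ) (x : Fin d → ℕ) :
    PW d N ℓ (fun t => (x t : ℤ)) = weightH d N ℓ x := by
  unfold PW weightH
  rw [Fin.prod_univ_castSucc]
  have h1 : ∀ k : Fin d, (EZ d N (fun t => ((x t : ℕ) : ℤ)) k.castSucc).toNat = x k := by
    intro k
    rw [EZ_castSucc]
    exact Int.toNat_natCast _
  have h2 : (EZ d N (fun t => ((x t : ℕ) : ℤ)) (Fin.last d)).toNat = N - ∑ t, x t := by
    rw [EZ_last]
    have : ∑ t, ((x t : ℤ)) = ((∑ t, x t : ℕ) : ℤ) := by push_cast; rfl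
    rw [this]
    omega
  simp only [h1, h2]

lemma innerH_eq (ℓ : Fin (d + 1) → ℕ) (F G : (Fin d → ℤ) → ℝ) :
    innerH d N ℓ F G = ∑ y ∈ DZ d N ℓ, F y * G y * PW d N ℓ y := by
  unfold DZ
  rw [Finset.sum_image]
  · exact Finset.sum_congr rfl fun x _ => by rw [weight_eq]
  · intro a _ b _ hab
    funext t
    have h := congrFun hab t
    beta_reduce at h
    exact_mod_cast h


lemma prodSwap (L : Fin (d + 1) → ℝ) (i j : Fin (d + 1)) (hij : i ≠ j)
    (n : Fin (d + 1) → ℕ) (hj : 1 ≤ n j) :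
    (∏ k, poch (-L k) (n k) / (Nat.factorial (n k) : ℝ)) * ((n j : ℝ) * ((n i : ℝ) - L i)) =
    (∏ k, poch (-L k) (Function.update (Function.update n j (n j - 1)) i (n i + 1) k) /
        (Nat.factorial (Function.update (Function.update n j (n j - 1)) i (n i + 1) k) : ℝ)) *
      (((n i : ℝ) + 1) * (((n j : ℝ) - 1) - L j)) := by
  set n' := Function.update (Function.update n j (n j - 1)) i (n i + 1) with hn'
  have hji : j ∈ (Finset.univ.erase i) := Finset.mem_erase.mpr ⟨(Ne.symm hij), Finset.mem_univ _⟩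
  rw [← Finset.mul_prod_erase Finset.univ (fun k => poch (-L k) (n k) / (Nat.factorial (n k) : ℝ))
      (Finset.mem_univ i),
    ← Finset.mul_prod_erase _ (fun k => poch (-L k) (n k) / (Nat.factorial (n k) : ℝ)) hji,
    ← Finset.mul_prod_erase Finset.univ (fun k => poch (-L k) (n' k) / (Nat.factorial (n' k) : ℝ))
      (Finset.mem_univ i),
    ← Finset.mul_prod_erase _ (fun k => poch (-L k) (n' k) / (Nat.factorial (n' k) : ℝ)) hji]
  have hsame : ∀ k ∈ (Finset.univ.erase i).erase j,
      poch (-L k) (n' k) / (Nat.factorial (n' k) : ℝ) =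
      poch (-L k) (n k) / (Nat.factorial (n k) : ℝ) := by
    intro k hk
    rw [Finset.mem_erase, Finset.mem_erase] at hk
    rw [hn', Function.update_of_ne hk.2.1, Function.update_of_ne hk.1]
  rw [Finset.prod_congr rfl hsame]
  have hn'i : n' i = n i + 1 := by rw [hn', Function.update_self]
  have hn'j : n' j = n j - 1 := by
    rw [hn', Function.update_of_ne (Ne.symm hij), Function.update_self]
  rw [hn'i, hn'j]
  obtain ⟨q, hq⟩ : ∃ q, n j = q + 1 := ⟨n j - 1, by omega⟩
  rw [hq]
  simp only [Nat.add_sub_cancel]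
  rw [poch_succ, poch_succ, Nat.factorial_succ (n i), Nat.factorial_succ q]
  have f1 : (Nat.factorial (n i) : ℝ) ≠ 0 := Nat.cast_ne_zero.mpr (Nat.factorial_ne_zero _)
  have f2 : (Nat.factorial q : ℝ) ≠ 0 := Nat.cast_ne_zero.mpr (Nat.factorial_ne_zero _)
  have f3 : ((n i : ℝ) + 1) ≠ 0 := by positivity
  have f4 : ((q : ℝ) + 1) ≠ 0 := by positivity
  push_cast
  field_simp
  ring


lemma boundary {ℓ : Fin (d + 1) → ℕ} (hlast : ℓ (Fin.last d) ≤ N)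
    (i j : Fin (d + 1)) (hij : i ≠ j) (y : Fin d → ℤ)
    (h1 : y ∈ DZ d N ℓ) (h2 : y + shiftVec d i - shiftVec d j ∉ DZ d N ℓ) :
    coordExt d (N : ℝ) y j * (coordExt d (N : ℝ) y i - (ℓ i : ℝ)) = 0 := by
  rw [mem_DZ hlast] at h1 h2
  push_neg at h2
  obtain ⟨k, hk⟩ := h2
  rw [EZ_move] at hk
  have key : EZ d N y j = 0 ∨ EZ d N y i = (ℓ i : ℤ) := by
    by_cases hki : k = i
    · subst hki
      right
      have := h1 k
      simp only [if_pos rfl, if_neg hij] at hk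
      omega
    · by_cases hkj : k = j
      · subst hkj
        left
        have := h1 k
        have hl : (0:ℤ) ≤ (ℓ k : ℤ) := by positivity
        simp only [if_pos rfl, if_neg hki] at hk
        omega
      · have := h1 k
        simp only [if_neg hki, if_neg hkj] at hk
        omega
  rw [coordExt_eq, coordExt_eq]
  rcases key with h | h
  · rw [h]; simp
  · rw [h]; simp

lemma balance {ℓ : Fin (d + 1) → ℕ} (hlast : ℓ (Fin.last d) ≤ N)
    (i j : Fin (d + 1)) (hij : i ≠ j) (y : Fin d → ℤ)
    (h1 : y ∈ DZ d N ℓ) (h2 : y + shiftVec d i - shiftVec d j ∈ DZ d N ℓ) :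
    PW d N ℓ y * (coordExt d (N : ℝ) y j * (coordExt d (N : ℝ) y i - (ℓ i : ℝ))) =
    PW d N ℓ (y + shiftVec d i - shiftVec d j) *
      (coordExt d (N : ℝ) (y + shiftVec d i - shiftVec d j) i *
        (coordExt d (N : ℝ) (y + shiftVec d i - shiftVec d j) j - (ℓ j : ℝ))) := by
  rw [mem_DZ hlast] at h1 h2
  set y' := y + shiftVec d i - shiftVec d j with hy'
  have hmv : ∀ k, EZ d N y' k = EZ d N y k + (if k = i then 1 else 0) -
      (if k = j then 1 else 0) := fun k => EZ_move y i j k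
  set n : Fin (d + 1) → ℕ := fun k => (EZ d N y k).toNat with hn
  set n' : Fin (d + 1) → ℕ := fun k => (EZ d N y' k).toNat with hn2
  have hny : ∀ k, ((n k : ℕ) : ℤ) = EZ d N y k := fun k => Int.toNat_of_nonneg (h1 k).1
  have hn'y : ∀ k, ((n' k : ℕ) : ℤ) = EZ d N y' k := fun k => Int.toNat_of_nonneg (h2 k).1
  have hmvi : EZ d N y' i = EZ d N y i + 1 := by
    have h := hmv i
    rw [if_pos rfl, if_neg hij] at h
    omega
  have hmvj : EZ d N y' j = EZ d N y j - 1 := by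
    have h := hmv j
    rw [if_pos rfl, if_neg (Ne.symm hij)] at h
    omega
  have hji : 1 ≤ n j := by
    have := (h2 j).1
    have h0 := hny j
    omega
  have hn'eq : n' = Function.update (Function.update n j (n j - 1)) i (n i + 1) := by
    funext k
    by_cases hki : k = i
    · subst hki
      rw [Function.update_self]
      have := hny k
      have := hn'y k
      omega
    · rw [Function.update_of_ne hki]
      by_cases hkj : k = j
      · subst hkj
        rw [Function.update_self]
        have := hny k
        have := hn'y k
        omega
      · rw [Function.update_of_ne hkj]
        have hk := hmv k
        simp only [if_neg hki, if_neg hkj] at hk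
        have := hny k
        have := hn'y k
        omega
  have hPW : PW d N ℓ y = (Nat.factorial N : ℝ) / poch (-((∑ t, ℓ t : ℕ) : ℝ)) N *
      ∏ k : Fin (d + 1), poch (-(ℓ k : ℝ)) (n k) / (Nat.factorial (n k) : ℝ) := rfl
  have hPW' : PW d N ℓ y' = (Nat.factorial N : ℝ) / poch (-((∑ t, ℓ t : ℕ) : ℝ)) N *
      ∏ k : Fin (d + 1), poch (-(ℓ k : ℝ)) (n' k) / (Nat.factorial (n' k) : ℝ) := rfl
  have e1 : coordExt d (N : ℝ) y j = (n j : ℝ) := by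
    rw [coordExt_eq, ← hny j]; push_cast; ring
  have e2 : coordExt d (N : ℝ) y i = (n i : ℝ) := by
    rw [coordExt_eq, ← hny i]; push_cast; ring
  have e3 : coordExt d (N : ℝ) y' i = (n i : ℝ) + 1 := by
    rw [coordExt_eq, hmvi, ← hny i]; push_cast; ring
  have e4 : coordExt d (N : ℝ) y' j = (n j : ℝ) - 1 := by
    rw [coordExt_eq, hmvj, ← hny j]; push_cast; ring
  rw [hPW, hPW', e1, e2, e3, e4, hn'eq]
  have core := prodSwap (fun k => (ℓ k : ℝ)) i j hij n hji
  linear_combination ((Nat.factorial N : ℝ) / poch (-((∑ t, ℓ t : ℕ) : ℝ)) N) * core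


lemma move_move (y : Fin d → ℤ) (i j : Fin (d + 1)) :
    (y + shiftVec d j - shiftVec d i) + shiftVec d i - shiftVec d j = y := by
  funext t
  simp only [Pi.sub_apply, Pi.add_apply]
  ring

end SelfAdjAux

open SelfAdjAux

/-- `L_{i,j}` is self-adjoint with respect to `⟨·,·⟩_{ℓ,N}`. -/
theorem stmt8 (d N : ℕ) (hd : 1 ≤ d) (hN : 1 ≤ N) (ℓ : Fin (d + 1) → ℕ)
    (hpos : ∀ i, 1 ≤ ℓ i) (hle : ∀ i, ℓ i ≤ N)
    (hpair : ∀ i j : Fin (d + 1), i < j → N ≤ ℓ i + ℓ j)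
    (i j : Fin (d + 1)) (hij : i ≠ j) (f g : (Fin d → ℤ) → ℝ) :
    innerH d N ℓ (Lop d (N : ℝ) (fun t => (ℓ t : ℝ)) i j f) g =
      innerH d N ℓ f (Lop d (N : ℝ) (fun t => (ℓ t : ℝ)) i j g) := by
  have hlast : ℓ (Fin.last d) ≤ N := hle _
  rw [innerH_eq, innerH_eq]
  rw [← sub_eq_zero, ← Finset.sum_sub_distrib]
  have step1 : ∀ y ∈ DZ d N ℓ,
      Lop d (N : ℝ) (fun t => (ℓ t : ℝ)) i j f y * g y * PW d N ℓ y -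
        f y * Lop d (N : ℝ) (fun t => (ℓ t : ℝ)) i j g y * PW d N ℓ y =
      PW d N ℓ y * (coordExt d (N : ℝ) y j * (coordExt d (N : ℝ) y i - (ℓ i : ℝ))) *
          (f (y + shiftVec d i - shiftVec d j) * g y -
            f y * g (y + shiftVec d i - shiftVec d j)) +
        PW d N ℓ y * (coordExt d (N : ℝ) y i * (coordExt d (N : ℝ) y j - (ℓ j : ℝ))) *
          (f (y + shiftVec d j - shiftVec d i) * g y -
            f y * g (y + shiftVec d j - shiftVec d i)) := by
    intro y _
    simp only [Lop]
    ring
  rw [Finset.sum_congr rfl step1, Finset.sum_add_distrib]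
  set T : (Fin d → ℤ) → ℝ := fun y =>
    PW d N ℓ y * (coordExt d (N : ℝ) y j * (coordExt d (N : ℝ) y i - (ℓ i : ℝ))) *
      (f (y + shiftVec d i - shiftVec d j) * g y -
        f y * g (y + shiftVec d i - shiftVec d j)) with hT
  set U : (Fin d → ℤ) → ℝ := fun y =>
    PW d N ℓ y * (coordExt d (N : ℝ) y i * (coordExt d (N : ℝ) y j - (ℓ j : ℝ))) *
      (f (y + shiftVec d j - shiftVec d i) * g y -
        f y * g (y + shiftVec d j - shiftVec d i)) with hU
  have hTfil : ∑ y ∈ DZ d N ℓ, T y =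
      ∑ y ∈ (DZ d N ℓ).filter (fun y => y + shiftVec d i - shiftVec d j ∈ DZ d N ℓ), T y := by
    symm
    apply Finset.sum_filter_of_ne
    intro y hy hTy
    by_contra hP
    apply hTy
    rw [hT]
    simp only [boundary hlast i j hij y hy hP]
    ring
  have hUfil : ∑ y ∈ DZ d N ℓ, U y =
      ∑ y ∈ (DZ d N ℓ).filter (fun y => y + shiftVec d j - shiftVec d i ∈ DZ d N ℓ), U y := by
    symm
    apply Finset.sum_filter_of_ne
    intro y hy hUy
    by_contra hP
    apply hUy
    rw [hU]
    simp only [boundary hlast j i (Ne.symm hij) y hy hP]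
    ring
  have hbij : ∑ y ∈ (DZ d N ℓ).filter (fun y => y + shiftVec d j - shiftVec d i ∈ DZ d N ℓ), U y =
      ∑ z ∈ (DZ d N ℓ).filter (fun z => z + shiftVec d i - shiftVec d j ∈ DZ d N ℓ), (- T z) := by
    apply Finset.sum_nbij' (fun y => y + shiftVec d j - shiftVec d i)
      (fun z => z + shiftVec d i - shiftVec d j)
    · intro y hy
      rw [Finset.mem_filter] at hy ⊢
      exact ⟨hy.2, by rw [move_move]; exact hy.1⟩
    · intro z hz
      rw [Finset.mem_filter] at hz ⊢
      refine ⟨hz.2, ?_⟩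
      have : (z + shiftVec d i - shiftVec d j) + shiftVec d j - shiftVec d i = z := by
        funext t
        simp only [Pi.sub_apply, Pi.add_apply]
        ring
      rw [this]
      exact hz.1
    · intro y _
      rw [move_move]
    · intro z _
      funext t
      simp only [Pi.sub_apply, Pi.add_apply]
      ring
    · intro y hy
      rw [Finset.mem_filter] at hy
      set z := y + shiftVec d j - shiftVec d i with hz
      have hzy : z + shiftVec d i - shiftVec d j = y := move_move y i j
      have hbal := balance hlast i j hij z hy.2 (by rw [hzy]; exact hy.1)
      rw [hzy] at hbal
      rw [hU, hT]
      simp only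
      rw [hzy, ← hbal]
      ring
  rw [hTfil, hUfil, hbij]
  rw [Finset.sum_neg_distrib]
  ring


end
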